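/- Third Lie derivative formula: X_h³ α = y₁³ α''' − y₁·((φ'·α')' + 2φ'·α''), where primes denote d/dx₁ and α depends only on x₁. -/

import Mathlib

/-- The hamiltonian vector field `X_h = y₁ ∂/∂x₁ - φ'(x₁) ∂/∂y₁` of
`h = y₁²/2 + φ(x₁)`, acting on functions of the plane. -/
noncomputable def Xh (φ' : ℝ → ℝ) (F : ℝ × ℝ → ℝ) : ℝ × ℝ → ℝ :=
  fun p => p.2 * fderiv ℝ F p (1, 0) - φ' p.1 * fderiv ℝ F p (0, 1)

lemma fder_eval (e f g e' f' g' : ℝ → ℝ)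
    (he : ∀ u, HasDerivAt e (e' u) u)
    (hf : ∀ u, HasDerivAt f (f' u) u)
    (hg : ∀ u, HasDerivAt g (g' u) u)
    (p : ℝ × ℝ) (v : ℝ × ℝ) :
    fderiv ℝ (fun q : ℝ × ℝ => q.2 * q.2 * e q.1 + q.2 * f q.1 + g q.1) p v
      = (e' p.1 * (p.2 * p.2) + f' p.1 * p.2 + g' p.1) * v.1
        + (2 * p.2 * e p.1 + f p.1) * v.2 := by
  have hE := (he p.1).comp_hasFDerivAt p
    (hasFDerivAt_fst : HasFDerivAt Prod.fst (ContinuousLinearMap.fst ℝ ℝ ℝ) p)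
  have hF := (hf p.1).comp_hasFDerivAt p
    (hasFDerivAt_fst : HasFDerivAt Prod.fst (ContinuousLinearMap.fst ℝ ℝ ℝ) p)
  have hG := (hg p.1).comp_hasFDerivAt p
    (hasFDerivAt_fst : HasFDerivAt Prod.fst (ContinuousLinearMap.fst ℝ ℝ ℝ) p)
  have hS : HasFDerivAt (fun q : ℝ × ℝ => q.2) (ContinuousLinearMap.snd ℝ ℝ ℝ) p :=
    hasFDerivAt_snd
  have hD := (((hS.mul hS).mul hE).add (hS.mul hF)).add hG
  simp only [Function.comp] at hD
  rw [(show HasFDerivAt (fun q : ℝ × ℝ => q.2 * q.2 * e q.1 + q.2 * f q.1 + g q.1) _ p from hD).fderiv]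
  simp [ContinuousLinearMap.smulRight_apply]
  ring

lemma Xh_eval (φ' e f g e' f' g' : ℝ → ℝ)
    (he : ∀ u, HasDerivAt e (e' u) u)
    (hf : ∀ u, HasDerivAt f (f' u) u)
    (hg : ∀ u, HasDerivAt g (g' u) u)
    (p : ℝ × ℝ) :
    Xh φ' (fun q : ℝ × ℝ => q.2 * q.2 * e q.1 + q.2 * f q.1 + g q.1) p
      = p.2 * (e' p.1 * (p.2 * p.2) + f' p.1 * p.2 + g' p.1)
        - φ' p.1 * (2 * p.2 * e p.1 + f p.1) := by
  simp only [Xh, fder_eval e f g e' f' g' he hf hg p]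
  ring

/-- Third Lie derivative formula:
`X_h³ α = y₁³ α''' - y₁ ((φ' α')' + 2 φ' α'')` for `α` depending only on `x₁`. -/
theorem third_lie_derivative (φ' φ'' α α' α'' α''' : ℝ → ℝ)
    (hφ' : ∀ u, HasDerivAt φ' (φ'' u) u)
    (hα : ∀ u, HasDerivAt α (α' u) u)
    (hα' : ∀ u, HasDerivAt α' (α'' u) u)
    (hα'' : ∀ u, HasDerivAt α'' (α''' u) u) :
    ∀ p : ℝ × ℝ, Xh φ' (Xh φ' (Xh φ' (fun q => α q.1))) p
      = p.2 ^ 3 * α''' p.1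
        - p.2 * ((φ'' p.1 * α' p.1 + φ' p.1 * α'' p.1) + 2 * φ' p.1 * α'' p.1) := by
  have hz : ∀ u : ℝ, HasDerivAt (fun _ : ℝ => (0 : ℝ)) 0 u := fun u => hasDerivAt_const u 0
  have hpa : ∀ u : ℝ, HasDerivAt (fun x => -(φ' x * α' x)) (-(φ'' u * α' u + φ' u * α'' u)) u :=
    fun u => ((hφ' u).mul (hα' u)).neg
  have H0 : (fun q : ℝ × ℝ => α q.1)
      = (fun q : ℝ × ℝ => q.2 * q.2 * (0 : ℝ) + q.2 * 0 + α q.1) := by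
    funext q; ring
  have H1 : Xh φ' (fun q : ℝ × ℝ => α q.1)
      = (fun q : ℝ × ℝ => q.2 * q.2 * (0 : ℝ) + q.2 * α' q.1 + 0) := by
    funext q
    rw [H0, Xh_eval φ' _ _ _ _ _ _ hz hz hα q]
    ring
  have H2 : Xh φ' (Xh φ' (fun q : ℝ × ℝ => α q.1))
      = (fun q : ℝ × ℝ => q.2 * q.2 * α'' q.1 + q.2 * 0 + -(φ' q.1 * α' q.1)) := by
    funext q
    rw [H1, Xh_eval φ' _ _ _ _ _ _ hz hα' hz q]
    ring
  intro p
  rw [H2, Xh_eval φ' _ _ _ _ _ _ hα'' hz hpa p]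
  ring
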